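/- arXiv:1106.0655 — 3 statements merged into one kernel-verified Lean document; each statement's English description precedes it below -/
import Mathlib

section
/- Fix a ∈ (0,1), c ∈ ℝ and μ > 0 with sin(μa) ≠ 0 and sin(μ(1−a)) ≠ 0. Then there exists a classical eigenfunction (with jump coefficient c) with eigenvalue μ² if and only if c = f_a(μ) = −μ·sin(μ)/(sin(μa)·sin(μ(1−a))). -/
open Set Real MeasureTheory
open Filter Topology

noncomputable section

/-- `u : [0,1] → ℝ` (modelled as a function on `ℝ`) is *admissible* for the operator `A`
with jump coefficient `c` at `a`: continuous on `[0,1]`, twice continuously differentiable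
on `[0,a]` and on `[a,1]` (with one-sided derivatives at `a`), vanishing at `0` and `1`,
and satisfying the jump condition `u'(a⁺) − u'(a⁻) = c·u(a)` (the one-sided derivatives at
`a` being the derivatives within `[a,1]` and `[0,a]` respectively). -/
def Admissible (a c : ℝ) (u : ℝ → ℝ) : Prop :=
  ContinuousOn u (Icc 0 1) ∧
  ContDiffOn ℝ 2 u (Icc 0 a) ∧
  ContDiffOn ℝ 2 u (Icc a 1) ∧
  u 0 = 0 ∧ u 1 = 0 ∧
  derivWithin u (Icc a 1) a - derivWithin u (Icc 0 a) a = c * u a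

/-- `u` is a *classical eigenfunction* of `A` (jump coefficient `c` at `a`) with
eigenvalue `lam`: admissible, not identically zero on `[0,1]`, and satisfying
`−u'' = lam·u` on `(0,a) ∪ (a,1)`. -/
def IsEigenfunction (a c lam : ℝ) (u : ℝ → ℝ) : Prop :=
  Admissible a c u ∧ (∃ x ∈ Icc (0 : ℝ) 1, u x ≠ 0) ∧
  ∀ x ∈ Ioo 0 a ∪ Ioo a 1, -(deriv (deriv u) x) = lam * u x

/-- The function `f_a(μ) = −μ·sin(μ)/(sin(μa)·sin(μ(1−a)))`. -/
def fA (a μ : ℝ) : ℝ :=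
  -(μ * Real.sin μ) / (Real.sin (μ * a) * Real.sin (μ * (1 - a)))

lemma hd_sin (μ x : ℝ) : HasDerivAt (fun y => Real.sin (μ*y)) (μ * Real.cos (μ*x)) x := by
  have h := (Real.hasDerivAt_sin (μ*x)).comp x ((hasDerivAt_id x).const_mul μ)
  refine h.congr_deriv ?_
  simp [mul_comm]

lemma hd_cos (μ x : ℝ) : HasDerivAt (fun y => Real.cos (μ*y)) (-(μ * Real.sin (μ*x))) x := by
  have h := (Real.hasDerivAt_cos (μ*x)).comp x ((hasDerivAt_id x).const_mul μ)
  refine h.congr_deriv ?_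
  ring

lemma inner2 (μ x : ℝ) : HasDerivAt (fun y => μ*(1-y)) (-μ) x := by
  have h := ((hasDerivAt_id x).const_sub 1).const_mul μ
  refine h.congr_deriv ?_
  ring

lemma hd_sin2 (μ x : ℝ) : HasDerivAt (fun y => Real.sin (μ*(1-y))) (-(μ * Real.cos (μ*(1-x)))) x := by
  have h := (Real.hasDerivAt_sin (μ*(1-x))).comp x (inner2 μ x)
  refine h.congr_deriv ?_
  ring

lemma hd_cos2 (μ x : ℝ) : HasDerivAt (fun y => Real.cos (μ*(1-y))) (μ * Real.sin (μ*(1-x))) x := by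
  have h := (Real.hasDerivAt_cos (μ*(1-x))).comp x (inner2 μ x)
  refine h.congr_deriv ?_
  ring

lemma hd2_sin (μ x : ℝ) : HasDerivAt (fun y => μ * Real.cos (μ*y)) (-(μ^2) * Real.sin (μ*x)) x := by
  have h := (hd_cos μ x).const_mul μ
  refine h.congr_deriv ?_; ring

lemma hd2_cos (μ x : ℝ) : HasDerivAt (fun y => -(μ * Real.sin (μ*y))) (-(μ^2) * Real.cos (μ*x)) x := by
  have h := ((hd_sin μ x).const_mul μ).neg
  refine h.congr_deriv ?_; ring

lemma hd2_sin2 (μ x : ℝ) : HasDerivAt (fun y => -(μ * Real.cos (μ*(1-y)))) (-(μ^2) * Real.sin (μ*(1-x))) x := by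
  have h := ((hd_cos2 μ x).const_mul μ).neg
  refine h.congr_deriv ?_; ring

lemma hd2_cos2 (μ x : ℝ) : HasDerivAt (fun y => μ * Real.sin (μ*(1-y))) (-(μ^2) * Real.cos (μ*(1-x))) x := by
  have h := (hd_sin2 μ x).const_mul μ
  refine h.congr_deriv ?_; ring

lemma wronskian_eq {p q lam : ℝ} (hpq : p < q) {u s s1 : ℝ → ℝ}
    (hu : ContDiffOn ℝ 2 u (Icc p q))
    (hODE : ∀ x ∈ Ioo p q, deriv (deriv u) x = -lam * u x)
    (hs : ∀ x, HasDerivAt s (s1 x) x)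
    (hs1 : ∀ x, HasDerivAt s1 (-lam * s x) x) :
    ∀ x ∈ Icc p q,
      derivWithin u (Icc p q) x * s x - u x * s1 x
        = derivWithin u (Icc p q) p * s p - u p * s1 p := by
  set D := derivWithin u (Icc p q) with hDdef
  set W : ℝ → ℝ := fun x => D x * s x - u x * s1 x with hWdef
  have hUD : UniqueDiffOn ℝ (Icc p q) := uniqueDiffOn_Icc hpq
  have hDcd : ContDiffOn ℝ 1 D (Icc p q) := hu.derivWithin hUD (by norm_num)
  have hscont : Continuous s := continuous_iff_continuousAt.2 fun x => (hs x).continuousAt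
  have hs1cont : Continuous s1 := continuous_iff_continuousAt.2 fun x => (hs1 x).continuousAt
  have hWcont : ContinuousOn W (Icc p q) :=
    ((hDcd.continuousOn.mul hscont.continuousOn).sub
      (hu.continuousOn.mul hs1cont.continuousOn))
  have hW0 : ∀ x ∈ Ioo p q, HasDerivAt W 0 x := by
    intro x hx
    have hmem : Icc p q ∈ 𝓝 x := Icc_mem_nhds hx.1 hx.2
    have hux : DifferentiableAt ℝ u x :=
      ((hu.differentiableOn (by norm_num)).differentiableAt hmem)
    have huD : HasDerivAt u (D x) x := by
      have h := hux.hasDerivAt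
      rwa [← derivWithin_of_mem_nhds hmem] at h
    have hDd : DifferentiableAt ℝ D x := (hDcd.differentiableOn one_ne_zero).differentiableAt hmem
    have hDev : D =ᶠ[𝓝 x] deriv u :=
      Filter.eventuallyEq_of_mem (Ioo_mem_nhds hx.1 hx.2)
        (fun y hy => derivWithin_of_mem_nhds (Icc_mem_nhds hy.1 hy.2))
    have hderivD : deriv D x = -lam * u x := by
      rw [hDev.deriv_eq]; exact hODE x hx
    have hDD : HasDerivAt D (-lam * u x) x := hderivD ▸ hDd.hasDerivAt
    have h := ((hDD.mul (hs x)).sub (huD.mul (hs1 x)))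
    refine h.congr_deriv ?_
    ring
  have hdiff : DifferentiableOn ℝ W (interior (Icc p q)) := by
    rw [interior_Icc]; exact fun x hx => ((hW0 x hx).differentiableAt).differentiableWithinAt
  have hd0 : ∀ x ∈ interior (Icc p q), deriv W x = 0 := by
    rw [interior_Icc]; exact fun x hx => (hW0 x hx).deriv
  have mono := monotoneOn_of_deriv_nonneg (convex_Icc p q) hWcont hdiff
    (fun x hx => (hd0 x hx).ge)
  have anti := antitoneOn_of_deriv_nonpos (convex_Icc p q) hWcont hdiff
    (fun x hx => (hd0 x hx).le)
  intro x hx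
  have hp : p ∈ Icc p q := left_mem_Icc.2 hpq.le
  exact le_antisymm (anti hp hx hx.1) (mono hp hx hx.1)

/-- **Frequency equation for the flute with an open hole.** For `μ > 0` with
`sin(μa) ≠ 0` and `sin(μ(1−a)) ≠ 0`, there exists a classical eigenfunction with
eigenvalue `μ²` and jump coefficient `c` if and only if `c = f_a(μ)`. -/
theorem eigenvalue_iff_frequency_equation {a c μ : ℝ} (ha : a ∈ Ioo (0 : ℝ) 1)
    (hμ : 0 < μ) (h1 : Real.sin (μ * a) ≠ 0) (h2 : Real.sin (μ * (1 - a)) ≠ 0) :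
    (∃ u : ℝ → ℝ, IsEigenfunction a c (μ ^ 2) u) ↔ c = fA a μ := by
  obtain ⟨h0a, ha1⟩ := ha
  have hsinadd : Real.sin μ
      = Real.sin (μ*a) * Real.cos (μ*(1-a)) + Real.cos (μ*a) * Real.sin (μ*(1-a)) := by
    have h := Real.sin_add (μ*a) (μ*(1-a))
    rw [show μ*a + μ*(1-a) = μ by ring] at h
    exact h
  constructor
  · rintro ⟨u, ⟨⟨hcont, hcd1, hcd2, hu0, hu1, hjump⟩, ⟨x0, hx0, hx0ne⟩, hODE⟩⟩
    have hODE1 : ∀ x ∈ Ioo 0 a, deriv (deriv u) x = -(μ^2) * u x := by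
      intro x hx; have := hODE x (Or.inl hx); linarith
    have hODE2 : ∀ x ∈ Ioo a 1, deriv (deriv u) x = -(μ^2) * u x := by
      intro x hx; have := hODE x (Or.inr hx); linarith
    -- Wronskian with sin(μx) on [0,a]
    have E1 := wronskian_eq h0a hcd1 hODE1 (hd_sin μ) (hd2_sin μ)
    have hE1 : ∀ x ∈ Icc 0 a,
        derivWithin u (Icc 0 a) x * Real.sin (μ*x) - u x * (μ * Real.cos (μ*x)) = 0 := by
      intro x hx
      have h := E1 x hx
      rw [mul_zero, Real.sin_zero, hu0] at h
      simpa using h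
    -- Wronskian with sin(μ(1-x)) on [a,1]
    have E2 := wronskian_eq ha1 hcd2 hODE2 (hd_sin2 μ) (hd2_sin2 μ)
    have hW2a : derivWithin u (Icc a 1) a * Real.sin (μ*(1-a))
        - u a * (-(μ * Real.cos (μ*(1-a)))) = 0 := by
      have h := E2 1 (right_mem_Icc.2 ha1.le)
      rw [show μ*(1-(1:ℝ)) = 0 by ring, Real.sin_zero, hu1] at h
      linear_combination -h
    have hE2 : ∀ x ∈ Icc a 1,
        derivWithin u (Icc a 1) x * Real.sin (μ*(1-x))
          - u x * (-(μ * Real.cos (μ*(1-x)))) = 0 := by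
      intro x hx
      rw [E2 x hx]
      exact hW2a
    have hE1a := hE1 a (right_mem_Icc.2 h0a.le)
    have hE2a := hW2a
    by_cases hua : u a = 0
    · -- u a = 0 forces u ≡ 0, contradiction
      exfalso
      have hdaz : derivWithin u (Icc 0 a) a = 0 := by
        rw [hua] at hE1a
        have h : derivWithin u (Icc 0 a) a * Real.sin (μ*a) = 0 := by linear_combination hE1a
        exact (mul_eq_zero.1 h).resolve_right h1
      have hdbz : derivWithin u (Icc a 1) a = 0 := by
        rw [hua] at hE2a
        have h : derivWithin u (Icc a 1) a * Real.sin (μ*(1-a)) = 0 := by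
          linear_combination hE2a
        exact (mul_eq_zero.1 h).resolve_right h2
      -- second Wronskians, with cos
      have V1 := wronskian_eq h0a hcd1 hODE1 (hd_cos μ) (hd2_cos μ)
      have hV1 : ∀ x ∈ Icc 0 a,
          derivWithin u (Icc 0 a) x * Real.cos (μ*x) - u x * (-(μ * Real.sin (μ*x))) = 0 := by
        intro x hx
        rw [V1 x hx, ← V1 a (right_mem_Icc.2 h0a.le), hua, hdaz]
        ring
      have V2 := wronskian_eq ha1 hcd2 hODE2 (hd_cos2 μ) (hd2_cos2 μ)
      have hV2 : ∀ x ∈ Icc a 1,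
          derivWithin u (Icc a 1) x * Real.cos (μ*(1-x)) - u x * (μ * Real.sin (μ*(1-x))) = 0 := by
        intro x hx
        rw [V2 x hx, hua, hdbz]
        ring
      have hz1 : ∀ x ∈ Icc (0:ℝ) a, u x = 0 := by
        intro x hx
        have e1 := hE1 x hx
        have v1 := hV1 x hx
        have pyth := Real.sin_sq_add_cos_sq (μ*x)
        have hμu : μ * u x = 0 := by
          linear_combination Real.sin (μ*x) * v1 - Real.cos (μ*x) * e1 - u x * pyth * μ
        have := mul_eq_zero.1 hμu
        rcases this with h | h
        · exact absurd h hμ.ne'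
        · exact h
      have hz2 : ∀ x ∈ Icc a (1:ℝ), u x = 0 := by
        intro x hx
        have e2 := hE2 x hx
        have v2 := hV2 x hx
        have pyth := Real.sin_sq_add_cos_sq (μ*(1-x))
        have hμu : μ * u x = 0 := by
          linear_combination Real.cos (μ*(1-x)) * e2 - Real.sin (μ*(1-x)) * v2 - u x * pyth * μ
        have := mul_eq_zero.1 hμu
        rcases this with h | h
        · exact absurd h hμ.ne'
        · exact h
      rcases le_total x0 a with hle | hle
      · exact hx0ne (hz1 x0 ⟨hx0.1, hle⟩)
      · exact hx0ne (hz2 x0 ⟨hle, hx0.2⟩)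
    · -- u a ≠ 0: derive the frequency equation
      simp only [fA]
      rw [eq_div_iff (mul_ne_zero h1 h2)]
      have key : c * (Real.sin (μ*a) * Real.sin (μ*(1-a))) * u a
          = -(μ * Real.sin μ) * u a := by
        linear_combination (-(Real.sin (μ*a) * Real.sin (μ*(1-a)))) * hjump
          + Real.sin (μ*a) * hE2a + (-(Real.sin (μ*(1-a)))) * hE1a
          + (μ * u a) * hsinadd
      exact mul_right_cancel₀ hua key
  · -- construct the eigenfunction
    intro hc
    set K1 := Real.sin (μ*a) with hK1
    set K2 := Real.sin (μ*(1-a)) with hK2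
    set g1 : ℝ → ℝ := fun x => Real.sin (μ*x) * K2 with hg1def
    set g2 : ℝ → ℝ := fun x => Real.sin (μ*(1-x)) * K1 with hg2def
    set u : ℝ → ℝ := fun x => if x ≤ a then g1 x else g2 x with hudef
    have hg12a : g1 a = g2 a := by simp only [hg1def, hg2def]; ring
    have hg1c : ContDiff ℝ 2 g1 := by
      apply ContDiff.mul _ contDiff_const
      exact Real.contDiff_sin.comp (contDiff_const.mul contDiff_id)
    have hg2c : ContDiff ℝ 2 g2 := by
      apply ContDiff.mul _ contDiff_const
      exact Real.contDiff_sin.comp (contDiff_const.mul (contDiff_const.sub contDiff_id))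
    have hEq1 : EqOn u g1 (Icc 0 a) := fun x hx => if_pos hx.2
    have hEq2 : EqOn u g2 (Icc a 1) := by
      intro x hx
      rcases eq_or_lt_of_le hx.1 with h | h
      · rw [hudef]; simp only [← h, le_refl, if_pos]; exact hg12a
      · exact if_neg (not_le.2 h)
    have hUcont : ContinuousOn u (Icc 0 1) := by
      apply Continuous.continuousOn
      exact Continuous.if_le hg1c.continuous hg2c.continuous continuous_id continuous_const
        (fun x hx => by rw [hx]; exact hg12a)
    have hu0 : u 0 = 0 := by
      rw [hEq1 (left_mem_Icc.2 h0a.le)]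
      simp [hg1def]
    have hu1 : u 1 = 0 := by
      rw [hEq2 (right_mem_Icc.2 ha1.le)]
      simp [hg2def]
    have hua : u a = K1 * K2 := by
      rw [hEq1 (right_mem_Icc.2 h0a.le)]
    have hd1 : derivWithin u (Icc 0 a) a = μ * Real.cos (μ*a) * K2 := by
      rw [derivWithin_congr hEq1 (hEq1 (right_mem_Icc.2 h0a.le))]
      exact ((hd_sin μ a).mul_const K2).hasDerivWithinAt.derivWithin
        ((uniqueDiffOn_Icc h0a) a (right_mem_Icc.2 h0a.le))
    have hd2' : derivWithin u (Icc a 1) a = -(μ * Real.cos (μ*(1-a))) * K1 := by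
      rw [derivWithin_congr hEq2 (hEq2 (left_mem_Icc.2 ha1.le))]
      exact ((hd_sin2 μ a).mul_const K1).hasDerivWithinAt.derivWithin
        ((uniqueDiffOn_Icc ha1) a (left_mem_Icc.2 ha1.le))
    refine ⟨u, ⟨⟨hUcont, hg1c.contDiffOn.congr hEq1, hg2c.contDiffOn.congr hEq2, hu0, hu1, ?_⟩,
      ⟨a, ⟨h0a.le, ha1.le⟩, ?_⟩, ?_⟩⟩
    · -- jump condition
      rw [hd1, hd2', hua, hc]
      simp only [fA, hK1, hK2]
      rw [div_mul_cancel₀ _ (mul_ne_zero h1 h2)]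
      linear_combination μ * hsinadd
    · rw [hua]; exact mul_ne_zero h1 h2
    · -- the ODE
      rintro x (hx | hx)
      · have hxa : x < a := hx.2
        have hev : ∀ y ∈ Iio a, u y = g1 y := fun y hy => if_pos hy.le
        have hd' : ∀ y ∈ Iio a, deriv u y = deriv g1 y := fun y hy =>
          Filter.EventuallyEq.deriv_eq (Filter.eventuallyEq_of_mem (Iio_mem_nhds hy) hev)
        have hdd : deriv (deriv u) x = deriv (deriv g1) x :=
          Filter.EventuallyEq.deriv_eq (Filter.eventuallyEq_of_mem (Iio_mem_nhds hxa) hd')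
        have hg1d : deriv g1 = fun y => μ * Real.cos (μ*y) * K2 :=
          funext fun y => ((hd_sin μ y).mul_const K2).deriv
        have hg1dd : deriv (deriv g1) x = -(μ^2) * Real.sin (μ*x) * K2 := by
          rw [hg1d]
          exact ((hd2_sin μ x).mul_const K2).deriv
        rw [hdd, hg1dd, hev x hxa]
        simp only [hg1def]
        ring
      · have hxa : a < x := hx.1
        have hev : ∀ y ∈ Ioi a, u y = g2 y := fun y hy => if_neg (not_le.2 hy)
        have hd' : ∀ y ∈ Ioi a, deriv u y = deriv g2 y := fun y hy =>
          Filter.EventuallyEq.deriv_eq (Filter.eventuallyEq_of_mem (Ioi_mem_nhds hy) hev)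
        have hdd : deriv (deriv u) x = deriv (deriv g2) x :=
          Filter.EventuallyEq.deriv_eq (Filter.eventuallyEq_of_mem (Ioi_mem_nhds hxa) hd')
        have hg2d : deriv g2 = fun y => -(μ * Real.cos (μ*(1-y))) * K1 :=
          funext fun y => ((hd_sin2 μ y).mul_const K1).deriv
        have hg2dd : deriv (deriv g2) x = -(μ^2) * Real.sin (μ*(1-x)) * K1 := by
          rw [hg2d]
          exact ((hd2_sin2 μ x).mul_const K1).deriv
        rw [hdd, hg2dd, hev x hxa]
        simp only [hg2def]
        ring

end
end

section
/- Fix a ∈ (0,1), c ∈ ℝ and μ > 0 with sin(μa) ≠ 0 and sin(μ(1−a)) ≠ 0. If u is a classical eigenfunction (with jump coefficient c) with eigenvalue μ², then necessarily c = f_a(μ), and there exists C ≠ 0 such that u(x) = C·sin(μx) for all x ∈ [0,a] and u(x) = C·(sin(μa)/sin(μ(1−a)))·sin(μ(1−x)) for all x ∈ [a,1]. -/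
open Set Real MeasureTheory

noncomputable section

open Topology in
lemma eqOn_Icc_of_eqOn_Ioo {p q : ℝ} (hpq : p < q) {f g : ℝ → ℝ}
    (hf : ContinuousOn f (Icc p q)) (hg : ContinuousOn g (Icc p q))
    (h : EqOn f g (Ioo p q)) : EqOn f g (Icc p q) := by
  intro x hx
  have hx' : x ∈ closure (Ioo p q) := by rw [closure_Ioo hpq.ne]; exact hx
  have hne : (𝓝[Ioo p q] x).NeBot := mem_closure_iff_nhdsWithin_neBot.mp hx'
  have hfx : Filter.Tendsto f (𝓝[Ioo p q] x) (𝓝 (f x)) :=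
    (hf x hx).mono_left (nhdsWithin_mono _ Ioo_subset_Icc_self)
  have hgx : Filter.Tendsto g (𝓝[Ioo p q] x) (𝓝 (g x)) :=
    (hg x hx).mono_left (nhdsWithin_mono _ Ioo_subset_Icc_self)
  have : Filter.Tendsto f (𝓝[Ioo p q] x) (𝓝 (g x)) :=
    hgx.congr' (by filter_upwards [self_mem_nhdsWithin] with y hy using (h hy).symm)
  exact tendsto_nhds_unique hfx this

lemma key_ode {p q μ : ℝ} (hpq : p < q) (hμ : 0 < μ) {u : ℝ → ℝ}
    (hu : ContDiffOn ℝ 2 u (Icc p q))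
    (hode : ∀ x ∈ Ioo p q, deriv (deriv u) x = -(μ ^ 2 * u x)) :
    ∃ A B : ℝ, ∀ x ∈ Icc p q, u x = A * Real.sin (μ * x) + B * Real.cos (μ * x) := by
  have hs : IsOpen (Ioo p q) := isOpen_Ioo
  have hus : ContDiffOn ℝ 2 u (Ioo p q) := hu.mono Ioo_subset_Icc_self
  have hd1 : ∀ x ∈ Ioo p q, HasDerivAt u (deriv u x) x := fun x hx =>
    ((hus.differentiableOn (by norm_num) x hx).differentiableAt (hs.mem_nhds hx)).hasDerivAt
  have hdu : ContDiffOn ℝ 1 (deriv u) (Ioo p q) := hus.deriv_of_isOpen hs (by norm_num)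
  have hd2 : ∀ x ∈ Ioo p q, HasDerivAt (deriv u) (deriv (deriv u) x) x := fun x hx =>
    ((hdu.differentiableOn (by norm_num) x hx).differentiableAt (hs.mem_nhds hx)).hasDerivAt
  set g1 : ℝ → ℝ := fun x => deriv u x * Real.cos (μ * x) + μ * u x * Real.sin (μ * x) with hg1def
  set g2 : ℝ → ℝ := fun x => deriv u x * Real.sin (μ * x) - μ * u x * Real.cos (μ * x) with hg2def
  have hlin : ∀ x : ℝ, HasDerivAt (fun y => μ * y) μ x := fun x => by
    simpa using (hasDerivAt_id x).const_mul μ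
  have hsin : ∀ x : ℝ, HasDerivAt (fun y => Real.sin (μ * y)) (Real.cos (μ * x) * μ) x :=
    fun x => (Real.hasDerivAt_sin (μ * x)).comp x (hlin x)
  have hcos : ∀ x : ℝ, HasDerivAt (fun y => Real.cos (μ * y)) (-Real.sin (μ * x) * μ) x :=
    fun x => (Real.hasDerivAt_cos (μ * x)).comp x (hlin x)
  have hg1 : ∀ x ∈ Ioo p q, HasDerivAt g1 0 x := by
    intro x hx
    have h := ((hd2 x hx).mul (hcos x)).add (((hd1 x hx).const_mul μ).mul (hsin x))
    have e : deriv (deriv u) x * Real.cos (μ * x) + deriv u x * (-Real.sin (μ * x) * μ) +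
        (μ * deriv u x * Real.sin (μ * x) + μ * u x * (Real.cos (μ * x) * μ)) = 0 := by
      rw [hode x hx]; ring
    rw [e] at h; exact h
  have hg2 : ∀ x ∈ Ioo p q, HasDerivAt g2 0 x := by
    intro x hx
    have h := ((hd2 x hx).mul (hsin x)).sub (((hd1 x hx).const_mul μ).mul (hcos x))
    have e : deriv (deriv u) x * Real.sin (μ * x) + deriv u x * (Real.cos (μ * x) * μ) -
        (μ * deriv u x * Real.cos (μ * x) + μ * u x * (-Real.sin (μ * x) * μ)) = 0 := by
      rw [hode x hx]; ring
    rw [e] at h; exact h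
  have hconst : ∀ (g : ℝ → ℝ), (∀ x ∈ Ioo p q, HasDerivAt g 0 x) →
      ∀ x ∈ Ioo p q, ∀ y ∈ Ioo p q, g x = g y := by
    intro g hg x hx y hy
    refine (convex_Ioo p q).is_const_of_fderivWithin_eq_zero
      (fun z hz => (hg z hz).differentiableAt.differentiableWithinAt) (fun z hz => ?_) hx hy
    rw [fderivWithin_of_isOpen hs hz]
    have h0 : ContinuousLinearMap.toSpanSingleton ℝ (0 : ℝ) = 0 := by
      ext; simp
    have := (hg z hz).hasFDerivAt
    rw [h0] at this
    exact this.fderiv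
  set x₀ : ℝ := (p + q) / 2 with hx₀def
  have hx₀ : x₀ ∈ Ioo p q := ⟨by simp [hx₀def]; linarith, by simp [hx₀def]; linarith⟩
  refine ⟨g1 x₀ / μ, -(g2 x₀ / μ), eqOn_Icc_of_eqOn_Ioo hpq (hu.continuousOn) (by fun_prop) ?_⟩
  intro x hx
  have e1 : g1 x = g1 x₀ := hconst g1 hg1 x hx x₀ hx₀
  have e2 : g2 x = g2 x₀ := hconst g2 hg2 x hx x₀ hx₀
  have pyth := Real.sin_sq_add_cos_sq (μ * x)
  have key : μ * u x = g1 x * Real.sin (μ * x) - g2 x * Real.cos (μ * x) := by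
    simp only [hg1def, hg2def]; linear_combination (-(μ * u x)) * pyth
  rw [e1, e2] at key
  field_simp
  linarith [key]


/-- **Necessity of the frequency equation and the form of eigenfunctions.** For `μ > 0`
with `sin(μa) ≠ 0` and `sin(μ(1−a)) ≠ 0`, if `u` is a classical eigenfunction with
eigenvalue `μ²` and jump coefficient `c`, then `c = f_a(μ)` and there is `C ≠ 0` with
`u(x) = C·sin(μx)` on `[0,a]` and `u(x) = C·(sin(μa)/sin(μ(1−a)))·sin(μ(1−x))` on
`[a,1]`. -/
theorem eigenfunction_form {a c μ : ℝ} (ha : a ∈ Ioo (0 : ℝ) 1) (hμ : 0 < μ)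
    (h1 : Real.sin (μ * a) ≠ 0) (h2 : Real.sin (μ * (1 - a)) ≠ 0)
    {u : ℝ → ℝ} (hu : IsEigenfunction a c (μ ^ 2) u) :
    c = fA a μ ∧ ∃ C : ℝ, C ≠ 0 ∧
      (∀ x ∈ Icc 0 a, u x = C * Real.sin (μ * x)) ∧
      (∀ x ∈ Icc a 1, u x =
        C * (Real.sin (μ * a) / Real.sin (μ * (1 - a))) * Real.sin (μ * (1 - x))) := by
  obtain ⟨⟨hcont, hCa, hCb, h0, h1v, hjump⟩, ⟨x₀, hx₀, hux₀⟩, hode⟩ := hu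
  obtain ⟨ha0, ha1⟩ := ha
  obtain ⟨A1, B1, hrep1⟩ := key_ode ha0 hμ hCa
    (fun x hx => by have := hode x (Or.inl hx); linarith)
  obtain ⟨A2, B2, hrep2⟩ := key_ode ha1 hμ hCb
    (fun x hx => by have := hode x (Or.inr hx); linarith)
  have hB1 : B1 = 0 := by
    have h := hrep1 0 ⟨le_refl 0, ha0.le⟩
    rw [h0] at h; simpa using h.symm
  have hform1 : ∀ x ∈ Icc (0:ℝ) a, u x = A1 * Real.sin (μ * x) := by
    intro x hx; rw [hrep1 x hx, hB1]; ring
  have hcon : A2 * Real.sin μ + B2 * Real.cos μ = 0 := by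
    have h := hrep2 1 ⟨ha1.le, le_refl 1⟩
    rw [h1v] at h; rw [mul_one] at h; exact h.symm
  set C2 : ℝ := B2 * Real.sin μ - A2 * Real.cos μ with hC2def
  have pyth := Real.sin_sq_add_cos_sq μ
  have hform2 : ∀ x ∈ Icc a (1:ℝ), u x = C2 * Real.sin (μ * (1 - x)) := by
    intro x hx
    rw [hrep2 x hx, show μ * (1 - x) = μ - μ * x by ring, Real.sin_sub, hC2def]
    linear_combination (Real.sin (μ * x) * Real.sin μ + Real.cos (μ * x) * Real.cos μ) * hcon
      - (A2 * Real.sin (μ * x) + B2 * Real.cos (μ * x)) * pyth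
  have hmatch : A1 * Real.sin (μ * a) = C2 * Real.sin (μ * (1 - a)) := by
    rw [← hform1 a ⟨ha0.le, le_refl a⟩, ← hform2 a ⟨le_refl a, ha1.le⟩]
  have hA1 : A1 ≠ 0 := by
    intro hA
    have hC2z : C2 = 0 := by
      have h := hmatch
      rw [hA, zero_mul] at h
      exact (mul_eq_zero.mp h.symm).resolve_right h2
    apply hux₀
    rcases le_total x₀ a with h | h
    · rw [hform1 x₀ ⟨hx₀.1, h⟩, hA]; ring
    · rw [hform2 x₀ ⟨h, hx₀.2⟩, hC2z]; ring
  have hUD1 : UniqueDiffWithinAt ℝ (Icc (0:ℝ) a) a := (uniqueDiffOn_Icc ha0) a ⟨ha0.le, le_refl a⟩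
  have hUD2 : UniqueDiffWithinAt ℝ (Icc a (1:ℝ)) a := (uniqueDiffOn_Icc ha1) a ⟨le_refl a, ha1.le⟩
  have hlin : ∀ x : ℝ, HasDerivAt (fun y => μ * y) μ x := fun x => by
    simpa using (hasDerivAt_id x).const_mul μ
  have hdl : derivWithin u (Icc 0 a) a = A1 * (Real.cos (μ * a) * μ) := by
    have hEq : EqOn u (fun x => A1 * Real.sin (μ * x)) (Icc 0 a) := fun x hx => hform1 x hx
    rw [derivWithin_congr hEq (hform1 a ⟨ha0.le, le_refl a⟩)]
    have hda : HasDerivAt (fun x => A1 * Real.sin (μ * x)) (A1 * (Real.cos (μ * a) * μ)) a :=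
      ((Real.hasDerivAt_sin (μ * a)).comp a (hlin a)).const_mul A1
    exact hda.hasDerivWithinAt.derivWithin hUD1
  have hdr : derivWithin u (Icc a 1) a = C2 * (Real.cos (μ * (1 - a)) * (0 - μ)) := by
    have hEq : EqOn u (fun x => C2 * Real.sin (μ - μ * x)) (Icc a 1) := fun x hx => by
      rw [hform2 x hx, show μ * (1 - x) = μ - μ * x by ring]
    have hEqa : u a = C2 * Real.sin (μ - μ * a) := by
      rw [hform2 a ⟨le_refl a, ha1.le⟩, show μ * (1 - a) = μ - μ * a by ring]
    rw [derivWithin_congr hEq hEqa]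
    have hda : HasDerivAt (fun x => C2 * Real.sin (μ - μ * x))
        (C2 * (Real.cos (μ - μ * a) * (0 - μ))) a :=
      have hsub : HasDerivAt (fun x => μ - μ * x) (0 - μ) a := (hasDerivAt_const a μ).sub (hlin a)
      have hsn : HasDerivAt Real.sin (Real.cos (μ - μ * a)) ((fun x => μ - μ * x) a) :=
        Real.hasDerivAt_sin (μ - μ * a)
      by have := (hsn.comp a hsub).const_mul C2; exact this
    have h := hda.hasDerivWithinAt.derivWithin hUD2
    rw [show μ - μ * a = μ * (1 - a) by ring] at h
    exact h
  rw [hdl, hdr, hform1 a ⟨ha0.le, le_refl a⟩] at hjump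
  have hsinadd : Real.sin μ =
      Real.sin (μ * a) * Real.cos (μ * (1 - a)) + Real.cos (μ * a) * Real.sin (μ * (1 - a)) := by
    have h := Real.sin_add (μ * a) (μ * (1 - a))
    rw [show μ * a + μ * (1 - a) = μ by ring] at h
    exact h
  have key2 : c * (Real.sin (μ * a) * Real.sin (μ * (1 - a))) * A1 = -(μ * Real.sin μ) * A1 := by
    linear_combination (-(Real.sin (μ * (1 - a)))) * hjump
      + μ * Real.cos (μ * (1 - a)) * hmatch + μ * A1 * hsinadd
  have hS : Real.sin (μ * a) * Real.sin (μ * (1 - a)) ≠ 0 := mul_ne_zero h1 h2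
  have hc : c = fA a μ := by
    rw [fA]
    exact (eq_div_iff hS).mpr (mul_right_cancel₀ hA1 key2)
  refine ⟨hc, A1, hA1, hform1, ?_⟩
  intro x hx
  have hC2v : C2 = A1 * (Real.sin (μ * a) / Real.sin (μ * (1 - a))) := by
    field_simp
    linear_combination -hmatch
  rw [hform2 x hx, hC2v]

end
end

section
/- Fix a ∈ (0,1) and c ≥ 0. If λ ∈ ℝ admits a classical eigenfunction (with jump coefficient c), then λ > 0. (The operator A is positive definite: all its eigenvalues are strictly positive.) -/
open Set Real MeasureTheory

noncomputable section

variable {u : ℝ → ℝ} {p q lam : ℝ}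

lemma G_hasDerivAt (hu : ContDiffOn ℝ 2 u (Icc p q))
    (heq : ∀ x ∈ Ioo p q, -(deriv (deriv u) x) = lam * u x)
    {x : ℝ} (hx : x ∈ Ioo p q) :
    HasDerivAt (fun y => u y * derivWithin u (Icc p q) y)
      ((deriv u x) ^ 2 - lam * (u x) ^ 2) x := by
  have hmem : Icc p q ∈ nhds x := Icc_mem_nhds hx.1 hx.2
  have hu2 : ContDiffOn ℝ 2 u (Ioo p q) := hu.mono Ioo_subset_Icc_self
  have hd1 : ContDiffOn ℝ 1 (deriv u) (Ioo p q) :=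
    hu2.deriv_of_isOpen isOpen_Ioo (by norm_num)
  have hu_diff : DifferentiableAt ℝ u x :=
    ((hu2 x hx).differentiableWithinAt (by norm_num)).differentiableAt
      (isOpen_Ioo.mem_nhds hx)
  have hd_diff : DifferentiableAt ℝ (deriv u) x :=
    ((hd1 x hx).differentiableWithinAt (by norm_num)).differentiableAt
      (isOpen_Ioo.mem_nhds hx)
  have h1 : HasDerivAt (fun y => u y * deriv u y)
      (deriv u x * deriv u x + u x * deriv (deriv u) x) x :=
    hu_diff.hasDerivAt.mul hd_diff.hasDerivAt
  have hval : deriv u x * deriv u x + u x * deriv (deriv u) x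
      = (deriv u x) ^ 2 - lam * (u x) ^ 2 := by
    have h2 := heq x hx
    have : deriv (deriv u) x = -(lam * u x) := by linarith
    rw [this]; ring
  rw [hval] at h1
  refine h1.congr_of_eventuallyEq ?_
  filter_upwards [isOpen_Ioo.mem_nhds hx] with y hy
  rw [derivWithin_of_mem_nhds (Icc_mem_nhds hy.1 hy.2)]

lemma G_monotone (hpq : p < q) (hu : ContDiffOn ℝ 2 u (Icc p q))
    (heq : ∀ x ∈ Ioo p q, -(deriv (deriv u) x) = lam * u x) (hlam : lam ≤ 0) :
    MonotoneOn (fun y => u y * derivWithin u (Icc p q) y) (Icc p q) := by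
  have hcont : ContinuousOn (fun y => u y * derivWithin u (Icc p q) y) (Icc p q) :=
    hu.continuousOn.mul
      ((hu.derivWithin (m := 1) (uniqueDiffOn_Icc hpq) (by norm_num)).continuousOn)
  refine monotoneOn_of_deriv_nonneg (convex_Icc p q) hcont ?_ ?_
  · rw [interior_Icc]
    exact fun x hx => (G_hasDerivAt hu heq hx).differentiableAt.differentiableWithinAt
  · rw [interior_Icc]
    intro x hx
    rw [(G_hasDerivAt hu heq hx).deriv]
    nlinarith [sq_nonneg (deriv u x), sq_nonneg (u x)]

/-- If `u p = 0` then `u u' ≥ 0` on `(p,q)`. -/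
lemma G_nonneg_left (hpq : p < q) (hu : ContDiffOn ℝ 2 u (Icc p q))
    (heq : ∀ x ∈ Ioo p q, -(deriv (deriv u) x) = lam * u x) (hlam : lam ≤ 0)
    (hup : u p = 0) {x : ℝ} (hx : x ∈ Ioo p q) :
    0 ≤ u x * derivWithin u (Icc p q) x := by
  by_contra hneg
  push_neg at hneg
  have hmono := G_monotone hpq hu heq hlam
  -- u^2 is strictly decreasing on [p, x]
  have hanti : StrictAntiOn (fun y => (u y) ^ 2) (Icc p x) := by
    refine strictAntiOn_of_deriv_neg (convex_Icc p x) ?_ ?_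
    · exact (hu.continuousOn.mono (Icc_subset_Icc le_rfl hx.2.le)).pow 2
    · rw [interior_Icc]
      intro y hy
      have hy' : y ∈ Ioo p q := ⟨hy.1, hy.2.trans hx.2⟩
      have hu_diff : DifferentiableAt ℝ u y :=
        (((hu.mono Ioo_subset_Icc_self) y hy').differentiableWithinAt
          (by norm_num)).differentiableAt (isOpen_Ioo.mem_nhds hy')
      have hF : HasDerivAt (fun z => (u z) ^ 2) (2 * u y * deriv u y) y := by
        have : HasDerivAt (fun z => (u z) ^ 2) _ y := hu_diff.hasDerivAt.pow 2
        simpa [mul_comm, mul_assoc, mul_left_comm] using this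
      rw [hF.deriv]
      have hGy : u y * derivWithin u (Icc p q) y ≤ u x * derivWithin u (Icc p q) x :=
        hmono ⟨hy'.1.le, hy'.2.le⟩ ⟨hx.1.le, hx.2.le⟩ hy.2.le
      rw [derivWithin_of_mem_nhds (Icc_mem_nhds hy'.1 hy'.2)] at hGy
      nlinarith
  have := hanti (left_mem_Icc.2 hx.1.le) (right_mem_Icc.2 hx.1.le) hx.1
  simp only [hup] at this
  nlinarith [sq_nonneg (u x)]

/-- If `u q = 0` then `u u' ≤ 0` on `(p,q)`. -/
lemma G_nonpos_right (hpq : p < q) (hu : ContDiffOn ℝ 2 u (Icc p q))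
    (heq : ∀ x ∈ Ioo p q, -(deriv (deriv u) x) = lam * u x) (hlam : lam ≤ 0)
    (huq : u q = 0) {x : ℝ} (hx : x ∈ Ioo p q) :
    u x * derivWithin u (Icc p q) x ≤ 0 := by
  by_contra hpos
  push_neg at hpos
  have hmono := G_monotone hpq hu heq hlam
  have hmonoF : StrictMonoOn (fun y => (u y) ^ 2) (Icc x q) := by
    refine strictMonoOn_of_deriv_pos (convex_Icc x q) ?_ ?_
    · exact (hu.continuousOn.mono (Icc_subset_Icc hx.1.le le_rfl)).pow 2
    · rw [interior_Icc]
      intro y hy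
      have hy' : y ∈ Ioo p q := ⟨hx.1.trans hy.1, hy.2⟩
      have hu_diff : DifferentiableAt ℝ u y :=
        (((hu.mono Ioo_subset_Icc_self) y hy').differentiableWithinAt
          (by norm_num)).differentiableAt (isOpen_Ioo.mem_nhds hy')
      have hF : HasDerivAt (fun z => (u z) ^ 2) (2 * u y * deriv u y) y := by
        have : HasDerivAt (fun z => (u z) ^ 2) _ y := hu_diff.hasDerivAt.pow 2
        simpa [mul_comm, mul_assoc, mul_left_comm] using this
      rw [hF.deriv]
      have hGy : u x * derivWithin u (Icc p q) x ≤ u y * derivWithin u (Icc p q) y :=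
        hmono ⟨hx.1.le, hx.2.le⟩ ⟨hy'.1.le, hy'.2.le⟩ hy.1.le
      rw [derivWithin_of_mem_nhds (Icc_mem_nhds hy'.1 hy'.2)] at hGy
      nlinarith
  have := hmonoF (left_mem_Icc.2 hx.2.le) (right_mem_Icc.2 hx.2.le) hx.2
  simp only [huq] at this
  nlinarith [sq_nonneg (u x)]

/-- **The operator `A` is positive definite.** For `c ≥ 0`, every `λ` admitting a
classical eigenfunction with jump coefficient `c` is strictly positive. -/
theorem eigenvalue_positive {a c lam : ℝ} (ha : a ∈ Ioo (0 : ℝ) 1) (hc : 0 ≤ c)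
    (h : ∃ u : ℝ → ℝ, IsEigenfunction a c lam u) : 0 < lam := by
  obtain ⟨u, ⟨hcont, h1, h2, hu0, hu1, hjump⟩, ⟨x₀, hx₀, hx₀ne⟩, heqAll⟩ := h
  by_contra hl
  push_neg at hl
  obtain ⟨ha0, ha1⟩ := ha
  have heq1 : ∀ x ∈ Ioo (0:ℝ) a, -(deriv (deriv u) x) = lam * u x :=
    fun x hx => heqAll x (Or.inl hx)
  have heq2 : ∀ x ∈ Ioo a 1, -(deriv (deriv u) x) = lam * u x :=
    fun x hx => heqAll x (Or.inr hx)
  set G1 : ℝ → ℝ := fun y => u y * derivWithin u (Icc 0 a) y with hG1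
  set G2 : ℝ → ℝ := fun y => u y * derivWithin u (Icc a 1) y with hG2
  have hmono1 := G_monotone ha0 h1 heq1 hl
  have hmono2 := G_monotone ha1 h2 heq2 hl
  -- G1 a ≥ 0
  have hmid1 : a / 2 ∈ Ioo (0:ℝ) a := ⟨by linarith, by linarith⟩
  have hG1a : 0 ≤ G1 a := by
    have h0 := G_nonneg_left ha0 h1 heq1 hl hu0 hmid1
    have := hmono1 ⟨hmid1.1.le, hmid1.2.le⟩ (right_mem_Icc.2 ha0.le) hmid1.2.le
    exact le_trans h0 this
  -- G2 a ≤ 0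
  have hmid2 : (a + 1) / 2 ∈ Ioo a 1 := ⟨by linarith, by linarith⟩
  have hG2a : G2 a ≤ 0 := by
    have h0 := G_nonpos_right ha1 h2 heq2 hl hu1 hmid2
    have := hmono2 (left_mem_Icc.2 ha1.le) ⟨hmid2.1.le, hmid2.2.le⟩ hmid2.1.le
    exact le_trans this h0
  -- jump: G2 a - G1 a = c * (u a)^2 ≥ 0
  have hjump2 : G2 a - G1 a = c * (u a) ^ 2 := by
    calc G2 a - G1 a = u a * (derivWithin u (Icc a 1) a - derivWithin u (Icc 0 a) a) := by
            simp only [hG1, hG2]; ring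
      _ = u a * (c * u a) := by rw [hjump]
      _ = c * (u a) ^ 2 := by ring
  have hG1a0 : G1 a = 0 := by nlinarith [mul_nonneg hc (sq_nonneg (u a))]
  -- u = 0 on [0, a]
  have hzero1 : ∀ y ∈ Icc (0:ℝ) a, u y = 0 := by
    have hGz : ∀ y ∈ Ioo (0:ℝ) a, G1 y = 0 := by
      intro y hy
      have hle := hmono1 ⟨hy.1.le, hy.2.le⟩ (right_mem_Icc.2 ha0.le) hy.2.le
      have hge := G_nonneg_left ha0 h1 heq1 hl hu0 hy
      simp only [hG1] at *
      linarith [hG1a0 ▸ hle]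
    have hanti : AntitoneOn (fun y => (u y) ^ 2) (Icc 0 a) := by
      refine antitoneOn_of_deriv_nonpos (convex_Icc 0 a) ((h1.continuousOn).pow 2) ?_ ?_
      · rw [interior_Icc]
        intro y hy
        have hu_diff : DifferentiableAt ℝ u y :=
          (((h1.mono Ioo_subset_Icc_self) y hy).differentiableWithinAt
            (by norm_num)).differentiableAt (isOpen_Ioo.mem_nhds hy)
        exact (hu_diff.pow 2).differentiableWithinAt
      · rw [interior_Icc]
        intro y hy
        have hu_diff : DifferentiableAt ℝ u y :=
          (((h1.mono Ioo_subset_Icc_self) y hy).differentiableWithinAt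
            (by norm_num)).differentiableAt (isOpen_Ioo.mem_nhds hy)
        have hF : HasDerivAt (fun z => (u z) ^ 2) (2 * u y * deriv u y) y := by
          have : HasDerivAt (fun z => (u z) ^ 2) _ y := hu_diff.hasDerivAt.pow 2
          simpa [mul_comm, mul_assoc, mul_left_comm] using this
        rw [hF.deriv]
        have := hGz y hy
        simp only [hG1, derivWithin_of_mem_nhds (Icc_mem_nhds hy.1 hy.2)] at this
        nlinarith
    intro y hy
    have := hanti (left_mem_Icc.2 ha0.le) hy hy.1
    simp only [hu0] at this
    nlinarith [sq_nonneg (u y)]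
  have hua : u a = 0 := hzero1 a (right_mem_Icc.2 ha0.le)
  -- G2 a = 0
  have hG2a0 : G2 a = 0 := by simp [hG2, hua]
  -- u = 0 on [a, 1]
  have hzero2 : ∀ y ∈ Icc a 1, u y = 0 := by
    have hGz : ∀ y ∈ Ioo a 1, G2 y = 0 := by
      intro y hy
      have hge := hmono2 (left_mem_Icc.2 ha1.le) ⟨hy.1.le, hy.2.le⟩ hy.1.le
      have hle := G_nonpos_right ha1 h2 heq2 hl hu1 hy
      simp only [hG2] at *
      linarith [hG2a0 ▸ hge]
    have hmonoF : MonotoneOn (fun y => (u y) ^ 2) (Icc a 1) := by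
      refine monotoneOn_of_deriv_nonneg (convex_Icc a 1) ((h2.continuousOn).pow 2) ?_ ?_
      · rw [interior_Icc]
        intro y hy
        have hu_diff : DifferentiableAt ℝ u y :=
          (((h2.mono Ioo_subset_Icc_self) y hy).differentiableWithinAt
            (by norm_num)).differentiableAt (isOpen_Ioo.mem_nhds hy)
        exact (hu_diff.pow 2).differentiableWithinAt
      · rw [interior_Icc]
        intro y hy
        have hu_diff : DifferentiableAt ℝ u y :=
          (((h2.mono Ioo_subset_Icc_self) y hy).differentiableWithinAt
            (by norm_num)).differentiableAt (isOpen_Ioo.mem_nhds hy)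
        have hF : HasDerivAt (fun z => (u z) ^ 2) (2 * u y * deriv u y) y := by
          have : HasDerivAt (fun z => (u z) ^ 2) _ y := hu_diff.hasDerivAt.pow 2
          simpa [mul_comm, mul_assoc, mul_left_comm] using this
        rw [hF.deriv]
        have := hGz y hy
        simp only [hG2, derivWithin_of_mem_nhds (Icc_mem_nhds hy.1 hy.2)] at this
        nlinarith
    intro y hy
    have := hmonoF hy (right_mem_Icc.2 ha1.le) hy.2
    simp only [hu1] at this
    nlinarith [sq_nonneg (u y)]
  -- contradiction
  rcases le_total x₀ a with hle | hge
  · exact hx₀ne (hzero1 x₀ ⟨hx₀.1, hle⟩)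
  · exact hx₀ne (hzero2 x₀ ⟨hge, hx₀.2⟩)

end
end
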